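/- arXiv:1710.07744 — 2 statements merged into one kernel-verified Lean document; each statement's English description precedes it below -/
import Mathlib

section
/- The first component A_x of the quantum Laplace–Runge–Lenz vector commutes with the Schrödinger operator H of the two-dimensional hydrogen atom: for every function f : ℝ² → ℂ that is C^∞ on S = ℝ² \ {0} and every p ∈ S, one has H(A_x f)(p) = A_x(H f)(p). -/
noncomputable section

open Complex

/-- `S = ℝ² \ {0}`. -/
def S : Set (ℝ × ℝ) := {p | p ≠ 0}

/-- Partial derivative in the first coordinate. -/
def pdx (f : ℝ × ℝ → ℂ) (p : ℝ × ℝ) : ℂ := fderiv ℝ f p (1, 0)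

/-- Partial derivative in the second coordinate. -/
def pdy (f : ℝ × ℝ → ℂ) (p : ℝ × ℝ) : ℂ := fderiv ℝ f p (0, 1)

/-- `r(x,y) = √(x² + y²)`. -/
def rr (p : ℝ × ℝ) : ℝ := Real.sqrt (p.1 ^ 2 + p.2 ^ 2)

/-- Angular momentum operator: `(Lf)(p) = y·∂ₓf(p) − x·∂_yf(p)`. -/
def Lop (f : ℝ × ℝ → ℂ) (p : ℝ × ℝ) : ℂ := (p.2 : ℂ) * pdx f p - (p.1 : ℂ) * pdy f p

/-- Schrödinger operator of the 2D hydrogen atom. -/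
def Hop (k : ℝ) (f : ℝ × ℝ → ℂ) (p : ℝ × ℝ) : ℂ :=
  -(1 / 2 : ℂ) * (pdx (pdx f) p + pdy (pdy f) p) - ((k / rr p : ℝ) : ℂ) * f p

/-- First component of the quantum Laplace–Runge–Lenz vector. -/
def Axop (k : ℝ) (f : ℝ × ℝ → ℂ) (p : ℝ × ℝ) : ℂ :=
  (Complex.I / (Real.sqrt 2 : ℂ)) *
    ((p.1 : ℂ) * pdy (pdy f) p - (p.2 : ℂ) * pdx (pdy f) p - (1 / 2 : ℂ) * pdx f p
      + ((k * p.1 / rr p : ℝ) : ℂ) * f p)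

/-- Second component of the quantum Laplace–Runge–Lenz vector. -/
def Ayop (k : ℝ) (f : ℝ × ℝ → ℂ) (p : ℝ × ℝ) : ℂ :=
  (Complex.I / (Real.sqrt 2 : ℂ)) *
    ((p.2 : ℂ) * pdx (pdx f) p - (p.1 : ℂ) * pdx (pdy f) p - (1 / 2 : ℂ) * pdy f p
      + ((k * p.2 / rr p : ℝ) : ℂ) * f p)

-- framework
def pd (v : ℝ × ℝ) (g : ℝ × ℝ → ℂ) (p : ℝ × ℝ) : ℂ := fderiv ℝ g p v
def Sm (g : ℝ × ℝ → ℂ) : Prop := ContDiffOn ℝ (⊤ : ℕ∞) g S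

lemma isOpen_S : IsOpen S := isOpen_compl_singleton

lemma Sm.diffAt {g} (hg : Sm g) {p} (hp : p ∈ S) : DifferentiableAt ℝ g p :=
  (hg.contDiffAt (isOpen_S.mem_nhds hp)).differentiableAt (by simp)

lemma Sm.pd {g} (hg : Sm g) (v : ℝ × ℝ) : Sm (pd v g) := by
  have h1 : ContDiffOn ℝ (⊤:ℕ∞) (fderiv ℝ g) S := hg.fderiv_of_isOpen isOpen_S (by simp)
  exact h1.clm_apply contDiffOn_const

lemma Sm.diffAt_fderiv {g} (hg : Sm g) {p} (hp : p ∈ S) :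
    DifferentiableAt ℝ (fderiv ℝ g) p := by
  have h1 : ContDiffOn ℝ (⊤:ℕ∞) (fderiv ℝ g) S := hg.fderiv_of_isOpen isOpen_S (by simp)
  exact (h1.contDiffAt (isOpen_S.mem_nhds hp)).differentiableAt (by simp)

lemma pd_swap {g} (hg : Sm g) {p} (hp : p ∈ S) (v w : ℝ × ℝ) :
    pd v (pd w g) p = pd w (pd v g) p := by
  have hsymm : IsSymmSndFDerivAt ℝ g p :=
    (hg.contDiffAt (isOpen_S.mem_nhds hp)).isSymmSndFDerivAt (by simp [minSmoothness_of_isRCLikeNormedField]; exact (WithTop.coe_le_coe.mpr (le_top : (2:ℕ∞) ≤ ⊤) : ((2:ℕ∞) : WithTop ℕ∞) ≤ ((⊤:ℕ∞) : WithTop ℕ∞)))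
  have key : ∀ a b : ℝ × ℝ, pd a (pd b g) p = fderiv ℝ (fderiv ℝ g) p a b := by
    intro a b
    have : pd b g = fun q => fderiv ℝ g q b := rfl
    rw [pd, this, fderiv_clm_apply (hg.diffAt_fderiv hp) (differentiableAt_const b)]
    simp
  rw [key, key, hsymm]

-- congruence on S
lemma pd_congrS {g h : ℝ × ℝ → ℂ} (hgh : Set.EqOn g h S) {p} (hp : p ∈ S) (v : ℝ × ℝ) :
    pd v g p = pd v h p := by
  have : g =ᶠ[nhds p] h := Filter.eventuallyEq_of_mem (isOpen_S.mem_nhds hp) hgh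
  simp only [pd, this.fderiv_eq]

-- Sm closure
lemma Sm.add {g h} (hg : Sm g) (hh : Sm h) : Sm (fun q => g q + h q) := ContDiffOn.add hg hh
lemma Sm.sub {g h} (hg : Sm g) (hh : Sm h) : Sm (fun q => g q - h q) := ContDiffOn.sub hg hh
lemma Sm.mul {g h} (hg : Sm g) (hh : Sm h) : Sm (fun q => g q * h q) := ContDiffOn.mul hg hh
lemma Sm.cmul {g} (a : ℂ) (hg : Sm g) : Sm (fun q => a * g q) := ContDiffOn.mul contDiffOn_const hg

-- first-order pointwise rules
lemma pd_add {g h} (hg : Sm g) (hh : Sm h) {p} (hp : p ∈ S) (v) :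
    pd v (fun q => g q + h q) p = pd v g p + pd v h p := by
  simp only [pd, fderiv_fun_add (hg.diffAt hp) (hh.diffAt hp)]; rfl

lemma pd_sub {g h} (hg : Sm g) (hh : Sm h) {p} (hp : p ∈ S) (v) :
    pd v (fun q => g q - h q) p = pd v g p - pd v h p := by
  simp only [pd, fderiv_fun_sub (hg.diffAt hp) (hh.diffAt hp)]; rfl

lemma pd_mul {g h} (hg : Sm g) (hh : Sm h) {p} (hp : p ∈ S) (v) :
    pd v (fun q => g q * h q) p = pd v g p * h p + g p * pd v h p := by
  simp only [pd, fderiv_fun_mul (hg.diffAt hp) (hh.diffAt hp)]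
  simp [smul_eq_mul]; ring

lemma pd_cmul {g} (a : ℂ) (hg : Sm g) {p} (hp : p ∈ S) (v) :
    pd v (fun q => a * g q) p = a * pd v g p := by
  simp only [pd, fderiv_const_mul (hg.diffAt hp) a]; rfl

-- second-order rules
lemma pd_pd_add {g h} (hg : Sm g) (hh : Sm h) {p} (hp : p ∈ S) (v w) :
    pd v (pd w (fun q => g q + h q)) p = pd v (pd w g) p + pd v (pd w h) p := by
  have e : Set.EqOn (pd w (fun q => g q + h q)) (fun q => pd w g q + pd w h q) S :=
    fun q hq => pd_add hg hh hq w
  rw [pd_congrS e hp v, pd_add (hg.pd w) (hh.pd w) hp v]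

lemma pd_pd_sub {g h} (hg : Sm g) (hh : Sm h) {p} (hp : p ∈ S) (v w) :
    pd v (pd w (fun q => g q - h q)) p = pd v (pd w g) p - pd v (pd w h) p := by
  have e : Set.EqOn (pd w (fun q => g q - h q)) (fun q => pd w g q - pd w h q) S :=
    fun q hq => pd_sub hg hh hq w
  rw [pd_congrS e hp v, pd_sub (hg.pd w) (hh.pd w) hp v]

lemma pd_pd_cmul {g} (a : ℂ) (hg : Sm g) {p} (hp : p ∈ S) (v w) :
    pd v (pd w (fun q => a * g q)) p = a * pd v (pd w g) p := by
  have e : Set.EqOn (pd w (fun q => a * g q)) (fun q => a * pd w g q) S :=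
    fun q hq => pd_cmul a hg hq w
  rw [pd_congrS e hp v, pd_cmul a (hg.pd w) hp v]

lemma pd_pd_mul {g h} (hg : Sm g) (hh : Sm h) {p} (hp : p ∈ S) (v w) :
    pd v (pd w (fun q => g q * h q)) p
      = pd v (pd w g) p * h p + pd w g p * pd v h p
        + pd v g p * pd w h p + g p * pd v (pd w h) p := by
  have e : Set.EqOn (pd w (fun q => g q * h q)) (fun q => pd w g q * h q + g q * pd w h q) S :=
    fun q hq => pd_mul hg hh hq w
  rw [pd_congrS e hp v, pd_add ((hg.pd w).mul hh) (hg.mul (hh.pd w)) hp v,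
    pd_mul (hg.pd w) hh hp v, pd_mul hg (hh.pd w) hp v]
  ring

-- atoms
def Xf : ℝ × ℝ → ℂ := fun q => (q.1 : ℂ)
def Yf : ℝ × ℝ → ℂ := fun q => (q.2 : ℂ)
def Uf : ℝ × ℝ → ℂ := fun q => (((rr q)⁻¹ : ℝ) : ℂ)

lemma sq_ne_zero {p : ℝ × ℝ} (hp : p ∈ S) : p.1 ^ 2 + p.2 ^ 2 ≠ 0 := by
  intro h
  have h1 : p.1 = 0 ∧ p.2 = 0 := by
    constructor <;> nlinarith [sq_nonneg p.1, sq_nonneg p.2]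
  exact hp (Prod.ext h1.1 h1.2)

lemma rr_pos {p : ℝ × ℝ} (hp : p ∈ S) : 0 < rr p := by
  have := sq_ne_zero hp
  have h2 : 0 < p.1 ^ 2 + p.2 ^ 2 := lt_of_le_of_ne (by positivity) (Ne.symm this)
  exact Real.sqrt_pos.mpr h2

lemma rr_ne {p : ℝ × ℝ} (hp : p ∈ S) : rr p ≠ 0 := (rr_pos hp).ne'

lemma Sm_X : Sm Xf := (Complex.ofRealCLM.contDiff.comp contDiff_fst).contDiffOn
lemma Sm_Y : Sm Yf := (Complex.ofRealCLM.contDiff.comp contDiff_snd).contDiffOn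

lemma contDiffOn_rr : ContDiffOn ℝ (⊤ : ℕ∞) rr S := by
  intro p hp
  exact ((Real.contDiffAt_sqrt (sq_ne_zero hp)).comp p
    (((contDiff_fst.pow 2).add (contDiff_snd.pow 2)).contDiffAt)).contDiffWithinAt

lemma Sm_U : Sm Uf := by
  have h1 : ContDiffOn ℝ (⊤ : ℕ∞) (fun q => (rr q)⁻¹) S :=
    contDiffOn_rr.inv (fun q hq => rr_ne hq)
  exact Complex.ofRealCLM.contDiff.comp_contDiffOn h1

lemma pd_X (p v) : pd v Xf p = (v.1 : ℂ) := by
  have h : Xf = (Complex.ofRealCLM.comp (ContinuousLinearMap.fst ℝ ℝ ℝ)) := rfl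
  rw [pd, h, ContinuousLinearMap.fderiv]
  simp

lemma pd_Y (p v) : pd v Yf p = (v.2 : ℂ) := by
  have h : Yf = (Complex.ofRealCLM.comp (ContinuousLinearMap.snd ℝ ℝ ℝ)) := rfl
  rw [pd, h, ContinuousLinearMap.fderiv]
  simp

lemma hasFDerivAt_rrinv {p : ℝ × ℝ} (hp : p ∈ S) :
    HasFDerivAt (fun q => (rr q)⁻¹)
      ((-((rr p) ^ 2)⁻¹) • ((1 / (2 * rr p)) •
        ((p.1 • (ContinuousLinearMap.fst ℝ ℝ ℝ) + p.1 • (ContinuousLinearMap.fst ℝ ℝ ℝ))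
          + (p.2 • (ContinuousLinearMap.snd ℝ ℝ ℝ) + p.2 • (ContinuousLinearMap.snd ℝ ℝ ℝ))))) p := by
  have h1 : HasFDerivAt (fun q : ℝ × ℝ => q.1 * q.1 + q.2 * q.2)
      ((p.1 • (ContinuousLinearMap.fst ℝ ℝ ℝ) + p.1 • (ContinuousLinearMap.fst ℝ ℝ ℝ))
        + (p.2 • (ContinuousLinearMap.snd ℝ ℝ ℝ) + p.2 • (ContinuousLinearMap.snd ℝ ℝ ℝ))) p :=
    ((hasFDerivAt_fst.mul hasFDerivAt_fst).add (hasFDerivAt_snd.mul hasFDerivAt_snd))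
  have h2 : HasFDerivAt (fun q : ℝ × ℝ => q.1 ^ 2 + q.2 ^ 2)
      ((p.1 • (ContinuousLinearMap.fst ℝ ℝ ℝ) + p.1 • (ContinuousLinearMap.fst ℝ ℝ ℝ))
        + (p.2 • (ContinuousLinearMap.snd ℝ ℝ ℝ) + p.2 • (ContinuousLinearMap.snd ℝ ℝ ℝ))) p := by
    have e : (fun q : ℝ × ℝ => q.1 ^ 2 + q.2 ^ 2) = fun q : ℝ × ℝ => q.1 * q.1 + q.2 * q.2 := by
      funext q; ring
    rw [e]; exact h1
  have hsq : HasDerivAt Real.sqrt (1 / (2 * rr p)) (p.1 ^ 2 + p.2 ^ 2) := by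
    have := Real.hasDerivAt_sqrt (sq_ne_zero hp)
    simpa [rr] using this
  have h3 : HasFDerivAt rr ((1 / (2 * rr p)) •
      ((p.1 • (ContinuousLinearMap.fst ℝ ℝ ℝ) + p.1 • (ContinuousLinearMap.fst ℝ ℝ ℝ))
        + (p.2 • (ContinuousLinearMap.snd ℝ ℝ ℝ) + p.2 • (ContinuousLinearMap.snd ℝ ℝ ℝ)))) p :=
    hsq.comp_hasFDerivAt p h2
  exact (hasDerivAt_inv (rr_ne hp)).comp_hasFDerivAt p h3

lemma pd_U {p : ℝ × ℝ} (hp : p ∈ S) (v : ℝ × ℝ) :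
    pd v Uf p = -((v.1 * p.1 + v.2 * p.2 : ℝ) : ℂ) * (Uf p) ^ 3 := by
  have hU : HasFDerivAt Uf (Complex.ofRealCLM.comp _) p :=
    Complex.ofRealCLM.hasFDerivAt.comp p (hasFDerivAt_rrinv hp)
  rw [pd, hU.fderiv]
  have hr := rr_ne hp
  simp only [ContinuousLinearMap.coe_comp', Function.comp_apply, ContinuousLinearMap.smul_apply,
    ContinuousLinearMap.add_apply, ContinuousLinearMap.coe_fst', ContinuousLinearMap.coe_snd',
    Complex.ofRealCLM_apply, Uf]
  push_cast
  field_simp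
  ring_nf
  push_cast
  ring


lemma pdx_eq (f : ℝ × ℝ → ℂ) : pdx f = pd (1,0) f := rfl
lemma pdy_eq (f : ℝ × ℝ → ℂ) : pdy f = pd (0,1) f := rfl

lemma Axop_eq (k : ℝ) (f : ℝ × ℝ → ℂ) : Axop k f = fun q =>
    (Complex.I / (Real.sqrt 2 : ℂ)) *
      (Xf q * pd (0,1) (pd (0,1) f) q - Yf q * pd (1,0) (pd (0,1) f) q
        - (1 / 2 : ℂ) * pd (1,0) f q + (k : ℂ) * (Xf q * (Uf q * f q))) := by
  funext q
  simp only [Axop, pdx_eq, pdy_eq, Xf, Yf, Uf]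
  push_cast
  ring

lemma Hop_eq (k : ℝ) (f : ℝ × ℝ → ℂ) : Hop k f = fun q =>
    -(1 / 2 : ℂ) * (pd (1,0) (pd (1,0) f) q + pd (0,1) (pd (0,1) f) q)
      - (k : ℂ) * (Uf q * f q) := by
  funext q
  simp only [Hop, pdx_eq, pdy_eq, Uf]
  push_cast
  ring

lemma pd_pd_X (p v w) : pd v (pd w Xf) p = 0 := by
  have h : pd w Xf = fun _ => (w.1 : ℂ) := funext fun q => pd_X q w
  rw [pd, h, fderiv_fun_const]
  rfl

lemma pd_pd_Y (p v w) : pd v (pd w Yf) p = 0 := by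
  have h : pd w Yf = fun _ => (w.2 : ℂ) := funext fun q => pd_Y q w
  rw [pd, h, fderiv_fun_const]
  rfl

lemma pd_swapE {g} (hg : Sm g) (v w) : Set.EqOn (pd v (pd w g)) (pd w (pd v g)) S :=
  fun _ hq => pd_swap hg hq v w

lemma EqOn_pd (v) {g h} (e : Set.EqOn g h S) : Set.EqOn (pd v g) (pd v h) S :=
  fun _ hq => pd_congrS e hq v

lemma pd_pd_U {p : ℝ × ℝ} (hp : p ∈ S) (v w : ℝ × ℝ) :
    pd v (pd w Uf) p = -((v.1 * w.1 + v.2 * w.2 : ℝ) : ℂ) * (Uf p) ^ 3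
      + 3 * ((w.1 * p.1 + w.2 * p.2 : ℝ) : ℂ) * ((v.1 * p.1 + v.2 * p.2 : ℝ) : ℂ) * (Uf p) ^ 5 := by
  have e : Set.EqOn (pd w Uf)
      (fun q => (-(w.1 : ℂ) * Xf q - (w.2 : ℂ) * Yf q) * (Uf q * (Uf q * Uf q))) S := by
    intro q hq
    rw [pd_U hq w]
    simp only [Xf, Yf, Uf]
    push_cast
    ring
  rw [pd_congrS e hp v,
    pd_mul ((Sm_X.cmul _).sub (Sm_Y.cmul _) : Sm fun q => -(w.1:ℂ) * Xf q - (w.2:ℂ) * Yf q)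
      (Sm_U.mul (Sm_U.mul Sm_U)) hp v,
    pd_sub (Sm_X.cmul _) (Sm_Y.cmul _) hp v, pd_cmul _ Sm_X hp v, pd_cmul _ Sm_Y hp v,
    pd_mul Sm_U (Sm_U.mul Sm_U) hp v, pd_mul Sm_U Sm_U hp v, pd_X, pd_Y, pd_U hp v]
  simp only [Xf, Yf, Uf]
  push_cast
  ring


set_option maxHeartbeats 4000000 in
/-- The first component `A_x` of the quantum Laplace–Runge–Lenz vector commutes with
the Schrödinger operator `H` of the two-dimensional hydrogen atom, pointwise on `S`. -/
theorem stmt_1 (k : ℝ) (hk : 0 < k) (f : ℝ × ℝ → ℂ)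
    (hf : ContDiffOn ℝ (⊤ : ℕ∞) f S) (p : ℝ × ℝ) (hp : p ∈ S) :
    Hop k (Axop k f) p = Axop k (Hop k f) p := by
  have hfS : Sm f := hf
  have hX := Sm_X
  have hY := Sm_Y
  have hU := Sm_U
  -- mixed partial derivative normalizations
  have h3a : pd (0,1) (pd (1,0) (pd (0,1) f)) p = pd (1,0) (pd (0,1) (pd (0,1) f)) p :=
    pd_swap (hfS.pd (0,1)) hp (0,1) (1,0)
  have h3b : pd (0,1) (pd (0,1) (pd (1,0) f)) p = pd (1,0) (pd (0,1) (pd (0,1) f)) p := by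
    rw [pd_congrS (pd_swapE hfS (0,1) (1,0)) hp (0,1)]
    exact h3a
  have hA : pd (0,1) (pd (0,1) (pd (1,0) (pd (1,0) f))) p
      = pd (1,0) (pd (1,0) (pd (0,1) (pd (0,1) f))) p := by
    rw [pd_congrS (pd_swapE (hfS.pd (1,0)) (0,1) (1,0)) hp (0,1),
      pd_swap ((hfS.pd (1,0)).pd (0,1)) hp (0,1) (1,0),
      pd_congrS (EqOn_pd (0,1) (pd_swapE hfS (0,1) (1,0))) hp (1,0),
      pd_congrS (pd_swapE (hfS.pd (0,1)) (0,1) (1,0)) hp (1,0)]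
  have hB : pd (0,1) (pd (0,1) (pd (1,0) (pd (0,1) f))) p
      = pd (1,0) (pd (0,1) (pd (0,1) (pd (0,1) f))) p := by
    rw [pd_congrS (pd_swapE (hfS.pd (0,1)) (0,1) (1,0)) hp (0,1),
      pd_swap ((hfS.pd (0,1)).pd (0,1)) hp (0,1) (1,0)]
  have hC : pd (1,0) (pd (0,1) (pd (1,0) (pd (1,0) f))) p
      = pd (1,0) (pd (1,0) (pd (1,0) (pd (0,1) f))) p := by
    rw [pd_congrS (pd_swapE (hfS.pd (1,0)) (0,1) (1,0)) hp (1,0),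
      pd_congrS (EqOn_pd (1,0) (pd_swapE hfS (0,1) (1,0))) hp (1,0)]
  have hUp : Uf p = (((rr p)⁻¹ : ℝ) : ℂ) := rfl
  have hXY : ((p.1 : ℂ) ^ 2 + (p.2 : ℂ) ^ 2) * (Uf p) ^ 2 = 1 := by
    have hreal : ((p.1 ^ 2 + p.2 ^ 2) * ((rr p)⁻¹) ^ 2 : ℝ) = 1 := by
      have h1 : rr p ^ 2 = p.1 ^ 2 + p.2 ^ 2 := Real.sq_sqrt (by positivity)
      rw [← h1]
      field_simp [rr_ne hp]
    rw [hUp]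
    exact_mod_cast hreal
  conv_lhs => rw [Hop_eq, Axop_eq]
  conv_rhs => rw [Axop_eq, Hop_eq]
  simp (config := { maxDischargeDepth := 100 }) only [pd_pd_mul, pd_pd_add, pd_pd_sub,
    pd_pd_cmul, pd_mul, pd_add, pd_sub, pd_cmul,
    pd_X, pd_Y, pd_U, pd_pd_X, pd_pd_Y, pd_pd_U,
    Sm.mul, Sm.add, Sm.sub, Sm.cmul, Sm.pd, hfS, hX, hY, hU, hp]
  rw [hA, hB, hC, h3a, h3b]
  simp only [Xf, Yf]
  push_cast
  linear_combination (Complex.I / (Real.sqrt 2 : ℂ)) *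
    (-(3/2 : ℂ) * (k : ℂ) * (p.1 : ℂ) * (Uf p) ^ 3 * f p
      + (k : ℂ) * (Uf p) * pd (1,0) f p) * hXY
end
end

section
/- The commutation relation [A_y, L] = A_x holds for the symmetry operators of the two-dimensional hydrogen atom: for every function f : ℝ² → ℂ that is C^∞ on S = ℝ² \ {0} and every p ∈ S, one has A_y(L f)(p) − L(A_y f)(p) = A_x f(p). -/
noncomputable section

open Complex

lemma S_mem_nhds {q : ℝ × ℝ} (hq : q ∈ S) : S ∈ nhds q := isOpen_S.mem_nhds hq

lemma diffAt {f : ℝ × ℝ → ℂ} (hf : ContDiffOn ℝ (⊤ : ℕ∞) f S) {q : ℝ × ℝ} (hq : q ∈ S) :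
    DifferentiableAt ℝ f q :=
  (hf.contDiffAt (S_mem_nhds hq)).differentiableAt (by simp)

lemma contDiffOn_fderiv {f : ℝ × ℝ → ℂ} (hf : ContDiffOn ℝ (⊤ : ℕ∞) f S) :
    ContDiffOn ℝ (⊤ : ℕ∞) (fderiv ℝ f) S :=
  hf.fderiv_of_isOpen isOpen_S (by simp)

lemma contDiffOn_pdx {f : ℝ × ℝ → ℂ} (hf : ContDiffOn ℝ (⊤ : ℕ∞) f S) :
    ContDiffOn ℝ (⊤ : ℕ∞) (pdx f) S :=
  (contDiffOn_fderiv hf).clm_apply contDiffOn_const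

lemma contDiffOn_pdy {f : ℝ × ℝ → ℂ} (hf : ContDiffOn ℝ (⊤ : ℕ∞) f S) :
    ContDiffOn ℝ (⊤ : ℕ∞) (pdy f) S :=
  (contDiffOn_fderiv hf).clm_apply contDiffOn_const

lemma pdx_congr {g h : ℝ × ℝ → ℂ} (hgh : Set.EqOn g h S) {q : ℝ × ℝ} (hq : q ∈ S) :
    pdx g q = pdx h q := by
  unfold pdx
  rw [Filter.EventuallyEq.fderiv_eq (Filter.eventually_of_mem (S_mem_nhds hq) hgh)]

lemma pdy_congr {g h : ℝ × ℝ → ℂ} (hgh : Set.EqOn g h S) {q : ℝ × ℝ} (hq : q ∈ S) :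
    pdy g q = pdy h q := by
  unfold pdy
  rw [Filter.EventuallyEq.fderiv_eq (Filter.eventually_of_mem (S_mem_nhds hq) hgh)]

lemma pdx_mul {g h : ℝ × ℝ → ℂ} {q : ℝ × ℝ} (hg : DifferentiableAt ℝ g q)
    (hh : DifferentiableAt ℝ h q) :
    pdx (fun z => g z * h z) q = g q * pdx h q + h q * pdx g q := by
  unfold pdx; rw [fderiv_fun_mul hg hh]; simp

lemma pdy_mul {g h : ℝ × ℝ → ℂ} {q : ℝ × ℝ} (hg : DifferentiableAt ℝ g q)
    (hh : DifferentiableAt ℝ h q) :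
    pdy (fun z => g z * h z) q = g q * pdy h q + h q * pdy g q := by
  unfold pdy; rw [fderiv_fun_mul hg hh]; simp

lemma pdx_sub {g h : ℝ × ℝ → ℂ} {q : ℝ × ℝ} (hg : DifferentiableAt ℝ g q)
    (hh : DifferentiableAt ℝ h q) :
    pdx (fun z => g z - h z) q = pdx g q - pdx h q := by
  unfold pdx; rw [fderiv_fun_sub hg hh]; simp

lemma pdy_sub {g h : ℝ × ℝ → ℂ} {q : ℝ × ℝ} (hg : DifferentiableAt ℝ g q)
    (hh : DifferentiableAt ℝ h q) :
    pdy (fun z => g z - h z) q = pdy g q - pdy h q := by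
  unfold pdy; rw [fderiv_fun_sub hg hh]; simp

lemma pdx_add {g h : ℝ × ℝ → ℂ} {q : ℝ × ℝ} (hg : DifferentiableAt ℝ g q)
    (hh : DifferentiableAt ℝ h q) :
    pdx (fun z => g z + h z) q = pdx g q + pdx h q := by
  unfold pdx; rw [fderiv_fun_add hg hh]; simp

lemma pdy_add {g h : ℝ × ℝ → ℂ} {q : ℝ × ℝ} (hg : DifferentiableAt ℝ g q)
    (hh : DifferentiableAt ℝ h q) :
    pdy (fun z => g z + h z) q = pdy g q + pdy h q := by
  unfold pdy; rw [fderiv_fun_add hg hh]; simp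

lemma pdx_const_mul (c : ℂ) {h : ℝ × ℝ → ℂ} {q : ℝ × ℝ} (hh : DifferentiableAt ℝ h q) :
    pdx (fun z => c * h z) q = c * pdx h q := by
  unfold pdx; rw [fderiv_const_mul hh c]; simp

lemma pdy_const_mul (c : ℂ) {h : ℝ × ℝ → ℂ} {q : ℝ × ℝ} (hh : DifferentiableAt ℝ h q) :
    pdy (fun z => c * h z) q = c * pdy h q := by
  unfold pdy; rw [fderiv_const_mul hh c]; simp

lemma hasFDerivAt_X (q : ℝ × ℝ) :
    HasFDerivAt (fun z : ℝ × ℝ => (z.1 : ℂ))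
      (Complex.ofRealCLM.comp (ContinuousLinearMap.fst ℝ ℝ ℝ)) q :=
  (Complex.ofRealCLM.comp (ContinuousLinearMap.fst ℝ ℝ ℝ)).hasFDerivAt

lemma hasFDerivAt_Y (q : ℝ × ℝ) :
    HasFDerivAt (fun z : ℝ × ℝ => (z.2 : ℂ))
      (Complex.ofRealCLM.comp (ContinuousLinearMap.snd ℝ ℝ ℝ)) q :=
  (Complex.ofRealCLM.comp (ContinuousLinearMap.snd ℝ ℝ ℝ)).hasFDerivAt

lemma diff_X (q : ℝ × ℝ) : DifferentiableAt ℝ (fun z : ℝ × ℝ => (z.1 : ℂ)) q :=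
  (hasFDerivAt_X q).differentiableAt

lemma diff_Y (q : ℝ × ℝ) : DifferentiableAt ℝ (fun z : ℝ × ℝ => (z.2 : ℂ)) q :=
  (hasFDerivAt_Y q).differentiableAt

lemma pdx_X (q : ℝ × ℝ) : pdx (fun z : ℝ × ℝ => (z.1 : ℂ)) q = 1 := by
  unfold pdx; rw [(hasFDerivAt_X q).fderiv]; simp

lemma pdx_Y (q : ℝ × ℝ) : pdx (fun z : ℝ × ℝ => (z.2 : ℂ)) q = 0 := by
  unfold pdx; rw [(hasFDerivAt_Y q).fderiv]; simp

lemma pdy_X (q : ℝ × ℝ) : pdy (fun z : ℝ × ℝ => (z.1 : ℂ)) q = 0 := by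
  unfold pdy; rw [(hasFDerivAt_X q).fderiv]; simp

lemma pdy_Y (q : ℝ × ℝ) : pdy (fun z : ℝ × ℝ => (z.2 : ℂ)) q = 1 := by
  unfold pdy; rw [(hasFDerivAt_Y q).fderiv]; simp

lemma pd_comm {f : ℝ × ℝ → ℂ} (hf : ContDiffOn ℝ (⊤ : ℕ∞) f S) {q : ℝ × ℝ} (hq : q ∈ S) :
    pdy (pdx f) q = pdx (pdy f) q := by
  have hq' : ContDiffAt ℝ (⊤ : ℕ∞) f q := hf.contDiffAt (S_mem_nhds hq)
  have hsymm := hq'.isSymmSndFDerivAt (by simp; exact WithTop.coe_le_coe.2 (le_top : (2:ℕ∞) ≤ ⊤))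
  have hdf : DifferentiableAt ℝ (fderiv ℝ f) q :=
    ((hq'.fderiv_right (m := 1) (WithTop.coe_le_coe.2 le_top)).differentiableAt one_ne_zero)
  have h1 : pdy (pdx f) q = fderiv ℝ (fderiv ℝ f) q (0, 1) (1, 0) := by
    unfold pdy pdx
    rw [fderiv_clm_apply hdf (differentiableAt_const _)]
    simp
  have h2 : pdx (pdy f) q = fderiv ℝ (fderiv ℝ f) q (1, 0) (0, 1) := by
    unfold pdy pdx
    rw [fderiv_clm_apply hdf (differentiableAt_const _)]
    simp
  rw [h1, h2, hsymm]

def cfun (k : ℝ) : ℝ × ℝ → ℂ := fun z => ((k * z.2 / rr z : ℝ) : ℂ)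

lemma rr_pos_s2 {q : ℝ × ℝ} (hq : q ∈ S) : 0 < rr q := by
  have hq' : q.1 ≠ 0 ∨ q.2 ≠ 0 := by
    by_contra h
    push_neg at h
    exact hq (Prod.ext h.1 h.2)
  have : 0 < q.1 ^ 2 + q.2 ^ 2 := by
    rcases hq' with h | h
    · have : 0 < q.1 ^ 2 := by positivity
      nlinarith [sq_nonneg q.2]
    · have : 0 < q.2 ^ 2 := by positivity
      nlinarith [sq_nonneg q.1]
  exact Real.sqrt_pos.2 this

lemma rr_sq {q : ℝ × ℝ} (hq : q ∈ S) : rr q ^ 2 = q.1 ^ 2 + q.2 ^ 2 :=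
  Real.sq_sqrt (by positivity)

lemma hasFDerivAt_norm2 (q : ℝ × ℝ) :
    HasFDerivAt (fun z : ℝ × ℝ => z.1 ^ 2 + z.2 ^ 2)
      ((q.1 • ContinuousLinearMap.fst ℝ ℝ ℝ + q.1 • ContinuousLinearMap.fst ℝ ℝ ℝ)
        + (q.2 • ContinuousLinearMap.snd ℝ ℝ ℝ + q.2 • ContinuousLinearMap.snd ℝ ℝ ℝ)) q := by
  have ha := (hasFDerivAt_fst (𝕜 := ℝ) (p := q) (E := ℝ) (F := ℝ)).mul
    (hasFDerivAt_fst (𝕜 := ℝ) (p := q) (E := ℝ) (F := ℝ))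
  have hb := (hasFDerivAt_snd (𝕜 := ℝ) (p := q) (E := ℝ) (F := ℝ)).mul
    (hasFDerivAt_snd (𝕜 := ℝ) (p := q) (E := ℝ) (F := ℝ))
  have h := ha.add hb
  have h2 : (fun z : ℝ × ℝ => z.1 * z.1 + z.2 * z.2) = fun z : ℝ × ℝ => z.1 ^ 2 + z.2 ^ 2 := by
    funext z; ring
  rw [← h2]; exact h

def rD (q : ℝ × ℝ) : ℝ × ℝ →L[ℝ] ℝ :=
  (1 / (2 * rr q)) •
    ((q.1 • ContinuousLinearMap.fst ℝ ℝ ℝ + q.1 • ContinuousLinearMap.fst ℝ ℝ ℝ)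
      + (q.2 • ContinuousLinearMap.snd ℝ ℝ ℝ + q.2 • ContinuousLinearMap.snd ℝ ℝ ℝ))

lemma hasFDerivAt_rr {q : ℝ × ℝ} (hq : q ∈ S) : HasFDerivAt rr (rD q) q := by
  have hn : q.1 ^ 2 + q.2 ^ 2 ≠ 0 := by
    have := rr_pos_s2 hq
    have h2 := rr_sq hq
    nlinarith
  have hs := (Real.hasDerivAt_sqrt hn).comp_hasFDerivAt q (hasFDerivAt_norm2 q)
  exact hs

def cD (k : ℝ) (q : ℝ × ℝ) : ℝ × ℝ →L[ℝ] ℝ :=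
  (k * q.2) • ((-(rr q ^ 2)⁻¹) • rD q) + (rr q)⁻¹ • (k • ContinuousLinearMap.snd ℝ ℝ ℝ)

lemma cfun_hasFDerivAt (k : ℝ) {q : ℝ × ℝ} (hq : q ∈ S) :
    HasFDerivAt (cfun k) (Complex.ofRealCLM.comp (cD k q)) q := by
  have hnum : HasFDerivAt (fun z : ℝ × ℝ => k * z.2) (k • ContinuousLinearMap.snd ℝ ℝ ℝ) q :=
    (hasFDerivAt_snd (𝕜 := ℝ) (p := q) (E := ℝ) (F := ℝ)).const_mul k
  have hinv : HasDerivAt (fun y : ℝ => y⁻¹) (-(rr q ^ 2)⁻¹) (rr q) :=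
    hasDerivAt_inv (ne_of_gt (rr_pos_s2 hq))
  have hrinv := hinv.comp_hasFDerivAt q (hasFDerivAt_rr hq)
  have hm := hnum.mul hrinv
  have hcomp := Complex.ofRealCLM.hasFDerivAt.comp q hm
  have hfun : (fun z : ℝ × ℝ => ((k * z.2 * (rr z)⁻¹ : ℝ) : ℂ)) = cfun k := by
    funext z; rw [cfun]; rw [div_eq_mul_inv]
  rw [← hfun]
  exact hcomp

lemma diff_cfun (k : ℝ) {q : ℝ × ℝ} (hq : q ∈ S) : DifferentiableAt ℝ (cfun k) q :=
  (cfun_hasFDerivAt k hq).differentiableAt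

lemma pdx_cfun (k : ℝ) {q : ℝ × ℝ} (hq : q ∈ S) :
    pdx (cfun k) q = ((-(k * q.2 * q.1) / rr q ^ 3 : ℝ) : ℂ) := by
  have hr := rr_pos_s2 hq
  have h := (cfun_hasFDerivAt k hq).fderiv
  show fderiv ℝ (cfun k) q (1, 0) = _
  rw [h]
  simp only [ContinuousLinearMap.coe_comp', Function.comp_apply, cD, rD,
    ContinuousLinearMap.add_apply, ContinuousLinearMap.smul_apply,
    ContinuousLinearMap.coe_fst', ContinuousLinearMap.coe_snd', smul_eq_mul,
    Complex.ofRealCLM_apply]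
  norm_num
  have hrC : ((rr q : ℝ) : ℂ) ≠ 0 := by
    exact_mod_cast ne_of_gt hr
  field_simp
  ring

lemma pdy_cfun (k : ℝ) {q : ℝ × ℝ} (hq : q ∈ S) :
    pdy (cfun k) q = ((k * q.1 ^ 2 / rr q ^ 3 : ℝ) : ℂ) := by
  have hr := rr_pos_s2 hq
  have hr2 := rr_sq hq
  have h := (cfun_hasFDerivAt k hq).fderiv
  show fderiv ℝ (cfun k) q (0, 1) = _
  rw [h]
  simp only [ContinuousLinearMap.coe_comp', Function.comp_apply, cD, rD,
    ContinuousLinearMap.add_apply, ContinuousLinearMap.smul_apply,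
    ContinuousLinearMap.coe_fst', ContinuousLinearMap.coe_snd', smul_eq_mul,
    Complex.ofRealCLM_apply]
  norm_num
  have hrC : ((rr q : ℝ) : ℂ) ≠ 0 := by
    exact_mod_cast ne_of_gt hr
  have hr2C : ((rr q : ℝ) : ℂ) ^ 2 = (q.1 : ℂ) ^ 2 + (q.2 : ℂ) ^ 2 := by
    exact_mod_cast congrArg (fun t : ℝ => (t : ℂ)) hr2
  field_simp
  linear_combination (2 * (k : ℂ)) * hr2C

/-- The commutation relation `[A_y, L] = A_x`, pointwise on `S = ℝ² \ {0}`. -/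
theorem stmt_2 (k : ℝ) (hk : 0 < k) (f : ℝ × ℝ → ℂ)
    (hf : ContDiffOn ℝ (⊤ : ℕ∞) f S) (p : ℝ × ℝ) (hp : p ∈ S) :
    Ayop k (Lop f) p - Lop (Ayop k f) p = Axop k f p := by
  have hfx := contDiffOn_pdx hf
  have hfy := contDiffOn_pdy hf
  have hfxx := contDiffOn_pdx hfx
  have hfxy := contDiffOn_pdx hfy
  have hfyy := contDiffOn_pdy hfy
  -- differentiability at points of S
  have dfS : ∀ q ∈ S, DifferentiableAt ℝ f q := fun q hq => diffAt hf hq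
  have dfx : ∀ q ∈ S, DifferentiableAt ℝ (pdx f) q := fun q hq => diffAt hfx hq
  have dfy : ∀ q ∈ S, DifferentiableAt ℝ (pdy f) q := fun q hq => diffAt hfy hq
  have dfxx : ∀ q ∈ S, DifferentiableAt ℝ (pdx (pdx f)) q := fun q hq => diffAt hfxx hq
  have dfxy : ∀ q ∈ S, DifferentiableAt ℝ (pdx (pdy f)) q := fun q hq => diffAt hfxy hq
  have dfyy : ∀ q ∈ S, DifferentiableAt ℝ (pdy (pdy f)) q := fun q hq => diffAt hfyy hq
  -- first derivatives of Lop f on S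
  have E1 : Set.EqOn (pdx (Lop f))
      (fun q => (q.2 : ℂ) * pdx (pdx f) q - (pdy f q + (q.1 : ℂ) * pdx (pdy f) q)) S := by
    intro q hq
    have h0 : pdx (Lop f) q
        = pdx (fun z => (z.2 : ℂ) * pdx f z - (z.1 : ℂ) * pdy f z) q := rfl
    rw [h0, pdx_sub ((diff_Y q).fun_mul (dfx q hq)) ((diff_X q).fun_mul (dfy q hq)),
      pdx_mul (diff_Y q) (dfx q hq), pdx_mul (diff_X q) (dfy q hq), pdx_X, pdx_Y]
    ring
  have E2 : Set.EqOn (pdy (Lop f))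
      (fun q => (pdx f q + (q.2 : ℂ) * pdx (pdy f) q) - (q.1 : ℂ) * pdy (pdy f) q) S := by
    intro q hq
    have h0 : pdy (Lop f) q
        = pdy (fun z => (z.2 : ℂ) * pdx f z - (z.1 : ℂ) * pdy f z) q := rfl
    rw [h0, pdy_sub ((diff_Y q).fun_mul (dfx q hq)) ((diff_X q).fun_mul (dfy q hq)),
      pdy_mul (diff_Y q) (dfx q hq), pdy_mul (diff_X q) (dfy q hq), pdy_X, pdy_Y,
      pd_comm hf hq]
    ring
  -- second derivatives of Lop f at p
  have E3 : pdx (pdx (Lop f)) p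
      = (p.2 : ℂ) * pdx (pdx (pdx f)) p
        - (2 * pdx (pdy f) p + (p.1 : ℂ) * pdx (pdx (pdy f)) p) := by
    rw [pdx_congr E1 hp,
      pdx_sub ((diff_Y p).fun_mul (dfxx p hp)) ((dfy p hp).fun_add ((diff_X p).fun_mul (dfxy p hp))),
      pdx_mul (diff_Y p) (dfxx p hp),
      pdx_add (dfy p hp) ((diff_X p).fun_mul (dfxy p hp)),
      pdx_mul (diff_X p) (dfxy p hp), pdx_X, pdx_Y]
    ring
  have E4 : pdx (pdy (Lop f)) p
      = (pdx (pdx f) p + (p.2 : ℂ) * pdx (pdx (pdy f)) p)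
        - (pdy (pdy f) p + (p.1 : ℂ) * pdx (pdy (pdy f)) p) := by
    rw [pdx_congr E2 hp,
      pdx_sub ((dfx p hp).fun_add ((diff_Y p).fun_mul (dfxy p hp))) ((diff_X p).fun_mul (dfyy p hp)),
      pdx_add (dfx p hp) ((diff_Y p).fun_mul (dfxy p hp)),
      pdx_mul (diff_Y p) (dfxy p hp), pdx_mul (diff_X p) (dfyy p hp), pdx_X, pdx_Y]
    ring
  -- derivatives of Ayop k f at p
  have E6 : pdx (Ayop k f) p
      = (Complex.I / (Real.sqrt 2 : ℂ)) *
          ((p.2 : ℂ) * pdx (pdx (pdx f)) p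
            - (pdx (pdy f) p + (p.1 : ℂ) * pdx (pdx (pdy f)) p)
            - (1 / 2 : ℂ) * pdx (pdy f) p
            + (pdx (cfun k) p * f p + cfun k p * pdx f p)) := by
    have h0 : pdx (Ayop k f) p
        = pdx (fun z => (Complex.I / (Real.sqrt 2 : ℂ)) *
            ((z.2 : ℂ) * pdx (pdx f) z - (z.1 : ℂ) * pdx (pdy f) z
              - (1 / 2 : ℂ) * pdy f z + cfun k z * f z)) p := rfl
    have d1 : DifferentiableAt ℝ (fun z => (z.2 : ℂ) * pdx (pdx f) z) p :=
      (diff_Y p).mul (dfxx p hp)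
    have d2 : DifferentiableAt ℝ (fun z => (z.1 : ℂ) * pdx (pdy f) z) p :=
      (diff_X p).mul (dfxy p hp)
    have d3 : DifferentiableAt ℝ (fun z => (1 / 2 : ℂ) * pdy f z) p :=
      (dfy p hp).const_mul _
    have d4 : DifferentiableAt ℝ (fun z => cfun k z * f z) p :=
      (diff_cfun k hp).mul (dfS p hp)
    rw [h0, pdx_const_mul _ (((d1.fun_sub d2).fun_sub d3).fun_add d4),
      pdx_add ((d1.fun_sub d2).fun_sub d3) d4, pdx_sub (d1.fun_sub d2) d3, pdx_sub d1 d2,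
      pdx_mul (diff_Y p) (dfxx p hp), pdx_mul (diff_X p) (dfxy p hp),
      pdx_const_mul _ (dfy p hp), pdx_mul (diff_cfun k hp) (dfS p hp),
      pdx_X, pdx_Y]
    ring
  have C1 : pdy (pdx (pdx f)) p = pdx (pdx (pdy f)) p := by
    rw [pd_comm hfx hp]
    exact pdx_congr (fun q hq => pd_comm hf hq) hp
  have C2 : pdy (pdx (pdy f)) p = pdx (pdy (pdy f)) p := pd_comm hfy hp
  have E7 : pdy (Ayop k f) p
      = (Complex.I / (Real.sqrt 2 : ℂ)) *
          ((pdx (pdx f) p + (p.2 : ℂ) * pdx (pdx (pdy f)) p)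
            - (p.1 : ℂ) * pdx (pdy (pdy f)) p
            - (1 / 2 : ℂ) * pdy (pdy f) p
            + (pdy (cfun k) p * f p + cfun k p * pdy f p)) := by
    have h0 : pdy (Ayop k f) p
        = pdy (fun z => (Complex.I / (Real.sqrt 2 : ℂ)) *
            ((z.2 : ℂ) * pdx (pdx f) z - (z.1 : ℂ) * pdx (pdy f) z
              - (1 / 2 : ℂ) * pdy f z + cfun k z * f z)) p := rfl
    have d1 : DifferentiableAt ℝ (fun z => (z.2 : ℂ) * pdx (pdx f) z) p :=
      (diff_Y p).mul (dfxx p hp)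
    have d2 : DifferentiableAt ℝ (fun z => (z.1 : ℂ) * pdx (pdy f) z) p :=
      (diff_X p).mul (dfxy p hp)
    have d3 : DifferentiableAt ℝ (fun z => (1 / 2 : ℂ) * pdy f z) p :=
      (dfy p hp).const_mul _
    have d4 : DifferentiableAt ℝ (fun z => cfun k z * f z) p :=
      (diff_cfun k hp).mul (dfS p hp)
    rw [h0, pdy_const_mul _ (((d1.fun_sub d2).fun_sub d3).fun_add d4),
      pdy_add ((d1.fun_sub d2).fun_sub d3) d4, pdy_sub (d1.fun_sub d2) d3, pdy_sub d1 d2,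
      pdy_mul (diff_Y p) (dfxx p hp), pdy_mul (diff_X p) (dfxy p hp),
      pdy_const_mul _ (dfy p hp), pdy_mul (diff_cfun k hp) (dfS p hp),
      pdy_X, pdy_Y, C1, C2]
    ring
  -- coulomb identity
  have hr := rr_pos_s2 hp
  have hrC : ((rr p : ℝ) : ℂ) ≠ 0 := by exact_mod_cast ne_of_gt hr
  have hr2C : ((rr p : ℝ) : ℂ) ^ 2 = (p.1 : ℂ) ^ 2 + (p.2 : ℂ) ^ 2 := by
    exact_mod_cast congrArg (fun t : ℝ => (t : ℂ)) (rr_sq hp)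
  have key : (p.1 : ℂ) * ((k * p.1 ^ 2 / rr p ^ 3 : ℝ) : ℂ)
      - (p.2 : ℂ) * ((-(k * p.2 * p.1) / rr p ^ 3 : ℝ) : ℂ)
      = ((k * p.1 / rr p : ℝ) : ℂ) := by
    push_cast
    field_simp
    linear_combination (-(k : ℂ) * (p.1 : ℂ)) * hr2C
  -- assemble
  have hL : Ayop k (Lop f) p
      = (Complex.I / (Real.sqrt 2 : ℂ)) *
          ((p.2 : ℂ) * pdx (pdx (Lop f)) p - (p.1 : ℂ) * pdx (pdy (Lop f)) p
            - (1 / 2 : ℂ) * pdy (Lop f) p + cfun k p * Lop f p) := rfl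
  have hLo : Lop (Ayop k f) p
      = (p.2 : ℂ) * pdx (Ayop k f) p - (p.1 : ℂ) * pdy (Ayop k f) p := rfl
  have hLf : Lop f p = (p.2 : ℂ) * pdx f p - (p.1 : ℂ) * pdy f p := rfl
  have hAx : Axop k f p
      = (Complex.I / (Real.sqrt 2 : ℂ)) *
          ((p.1 : ℂ) * pdy (pdy f) p - (p.2 : ℂ) * pdx (pdy f) p
            - (1 / 2 : ℂ) * pdx f p + ((k * p.1 / rr p : ℝ) : ℂ) * f p) := rfl
  rw [hL, hLo, hAx, E3, E4, E2 hp, E6, E7, hLf, pdx_cfun k hp, pdy_cfun k hp]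
  linear_combination (Complex.I / (Real.sqrt 2 : ℂ)) * f p * key
end
end
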